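/- Let ε > 0. Then there is no infinite pair of multiplicative complements (A,B) ∈ MC₂ with B(x) = o(x) such that A(x) = O( x / ( (log x) (log log x)^{1+ε} ) ). -/

import Mathlib

open Filter

/-- Counting function: number of elements of `A` that are at most `x`. -/
noncomputable def cnt (A : Set ℕ) (x : ℕ) : ℕ := {a ∈ A | a ≤ x}.ncard

/-- `(A, B)` are multiplicative complements of order 2: both are sets of positive
integers and every positive integer is a product `a * b` with `a ∈ A`, `b ∈ B`. -/
def MC2 (A B : Set ℕ) : Prop :=
  A ⊆ {n | 0 < n} ∧ B ⊆ {n | 0 < n} ∧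
    ∀ n : ℕ, 0 < n → ∃ a ∈ A, ∃ b ∈ B, n = a * b

namespace Stmt7


open scoped Classical in
noncomputable def Af (S : Set ℕ) (x : ℕ) : Finset ℕ := (Finset.Icc 1 x).filter (fun a => a ∈ S)

lemma mem_Af {S : Set ℕ} {x a : ℕ} : a ∈ Af S x ↔ (1 ≤ a ∧ a ≤ x) ∧ a ∈ S := by
  classical
  simp [Af, Finset.mem_filter, Finset.mem_Icc]

lemma cnt_eq_card {S : Set ℕ} (hS : S ⊆ {n | 0 < n}) (x : ℕ) :
    cnt S x = (Af S x).card := by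
  rw [cnt, ← Set.ncard_coe_finset]
  congr 1
  ext a
  simp only [Set.mem_setOf_eq, Finset.coe_sort_coe, Finset.mem_coe, mem_Af]
  constructor
  · rintro ⟨ha, hax⟩; exact ⟨⟨hS ha, hax⟩, ha⟩
  · rintro ⟨⟨_, hax⟩, ha⟩; exact ⟨ha, hax⟩

lemma cnt_le_self {S : Set ℕ} (hS : S ⊆ {n | 0 < n}) (x : ℕ) : cnt S x ≤ x := by
  classical
  rw [cnt_eq_card hS]
  calc (Af S x).card ≤ (Finset.Icc 1 x).card := Finset.card_le_card (Finset.filter_subset _ _)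
  _ = x := by simp

lemma mc2_count {A B : Set ℕ} (h : MC2 A B) (x : ℕ) :
    x ≤ ∑ a ∈ Af A x, cnt B (x / a) := by
  classical
  obtain ⟨hA, hB, hAB⟩ := h
  have hsub : Finset.Icc 1 x ⊆ (Af A x).biUnion
      (fun a => (Af B (x / a)).image (a * ·)) := by
    intro n hn
    rw [Finset.mem_Icc] at hn
    obtain ⟨a, ha, b, hb, rfl⟩ := hAB n hn.1
    have hapos : 0 < a := hA ha
    have hbpos : 0 < b := hB hb
    refine Finset.mem_biUnion.2 ⟨a, mem_Af.2 ⟨⟨hapos, ?_⟩, ha⟩, ?_⟩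
    · exact le_trans (Nat.le_mul_of_pos_right a hbpos) hn.2
    · refine Finset.mem_image.2 ⟨b, mem_Af.2 ⟨⟨hbpos, ?_⟩, hb⟩, rfl⟩
      exact (Nat.le_div_iff_mul_le hapos).2 (by rw [mul_comm]; exact hn.2)
  calc x = (Finset.Icc 1 x).card := by simp
  _ ≤ ((Af A x).biUnion (fun a => (Af B (x / a)).image (a * ·))).card :=
      Finset.card_le_card hsub
  _ ≤ ∑ a ∈ Af A x, ((Af B (x / a)).image (a * ·)).card := Finset.card_biUnion_le
  _ ≤ ∑ a ∈ Af A x, cnt B (x / a) := by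
      refine Finset.sum_le_sum fun a _ => ?_
      rw [cnt_eq_card hB]
      exact Finset.card_image_le


variable {ε : ℝ}

noncomputable def phi (ε : ℝ) (x : ℝ) : ℝ := (x * Real.log x * Real.log (Real.log x) ^ (1 + ε))⁻¹

noncomputable def FF (ε : ℝ) (x : ℝ) : ℝ := -ε⁻¹ * Real.log (Real.log x) ^ (-ε)

lemma one_lt_log (x : ℝ) (hx : 3 ≤ x) : 1 < Real.log x := by
  rw [← Real.exp_lt_exp, Real.exp_log (by linarith)]
  calc Real.exp 1 < 2.7182818286 := Real.exp_one_lt_d9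
  _ ≤ x := by norm_num at hx ⊢; linarith

lemma loglog_pos {x : ℝ} (hx : 3 ≤ x) : 0 < Real.log (Real.log x) :=
  Real.log_pos (one_lt_log x hx)

lemma denom_pos (hε : 0 < ε) {x : ℝ} (hx : 3 ≤ x) :
    0 < x * Real.log x * Real.log (Real.log x) ^ (1 + ε) := by
  have h1 : 0 < Real.log x := lt_trans one_pos (one_lt_log x hx)
  have h2 := loglog_pos hx
  have : (0:ℝ) < x := by linarith
  positivity

lemma phi_pos (hε : 0 < ε) {x : ℝ} (hx : 3 ≤ x) : 0 < phi ε x :=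
  inv_pos.2 (denom_pos hε hx)

lemma phi_anti (hε : 0 < ε) {x y : ℝ} (hx : 3 ≤ x) (hxy : x ≤ y) : phi ε y ≤ phi ε x := by
  have hy : 3 ≤ y := le_trans hx hxy
  have h1x : 0 < Real.log x := lt_trans one_pos (one_lt_log x hx)
  have h2x := loglog_pos hx
  refine inv_anti₀ (denom_pos hε hx) ?_
  have hlog : Real.log x ≤ Real.log y := Real.log_le_log (by linarith) hxy
  have hll : Real.log (Real.log x) ≤ Real.log (Real.log y) := Real.log_le_log h1x hlog
  have hr : Real.log (Real.log x) ^ (1 + ε) ≤ Real.log (Real.log y) ^ (1 + ε) :=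
    Real.rpow_le_rpow h2x.le hll (by linarith)
  have hx0 : (0:ℝ) < x := by linarith
  have h1y : 0 < Real.log y := lt_trans one_pos (one_lt_log y hy)
  have hy0 : (0:ℝ) < y := by linarith
  calc x * Real.log x * Real.log (Real.log x) ^ (1 + ε)
      ≤ y * Real.log y * Real.log (Real.log y) ^ (1 + ε) := by
        apply mul_le_mul (mul_le_mul hxy hlog h1x.le (by linarith)) hr
          (Real.rpow_nonneg h2x.le _)
        positivity

lemma FF_hasDeriv (hε : 0 < ε) {x : ℝ} (hx : 3 ≤ x) : HasDerivAt (FF ε) (phi ε x) x := by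
  have hx0 : (0:ℝ) < x := by linarith
  have h1 : 0 < Real.log x := lt_trans one_pos (one_lt_log x hx)
  have h2 : 0 < Real.log (Real.log x) := loglog_pos hx
  have d1 : HasDerivAt Real.log x⁻¹ x := Real.hasDerivAt_log hx0.ne'
  have d2 : HasDerivAt (fun y => Real.log (Real.log y)) ((Real.log x)⁻¹ * x⁻¹) x :=
    (Real.hasDerivAt_log h1.ne').comp x d1
  have d3 : HasDerivAt (fun y : ℝ => y ^ (-ε)) (-ε * Real.log (Real.log x) ^ (-ε - 1))
      (Real.log (Real.log x)) := Real.hasDerivAt_rpow_const (Or.inl h2.ne')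
  have d4 : HasDerivAt (fun y => Real.log (Real.log y) ^ (-ε))
      ((-ε * Real.log (Real.log x) ^ (-ε - 1)) * ((Real.log x)⁻¹ * x⁻¹)) x := by have := HasDerivAt.comp x d3 d2; exact this
  have d5 : HasDerivAt (fun y => -ε⁻¹ * Real.log (Real.log y) ^ (-ε))
      (-ε⁻¹ * (-ε * Real.log (Real.log x) ^ (-ε - 1) * ((Real.log x)⁻¹ * x⁻¹))) x :=
    d4.const_mul (-ε⁻¹)
  convert d5 using 1
  · rfl
  have hre : Real.log (Real.log x) ^ (-ε - 1) = (Real.log (Real.log x) ^ (1 + ε))⁻¹ := by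
    rw [show -ε - 1 = -(1 + ε) by ring, Real.rpow_neg h2.le]
  rw [phi, hre, mul_inv, mul_inv]
  have hεne : ε ≠ 0 := hε.ne'
  field_simp

lemma phi_step (hε : 0 < ε) {t : ℝ} (ht : 3 ≤ t) :
    phi ε (t + 1) ≤ FF ε (t + 1) - FF ε t := by
  obtain ⟨ξ, hξ, hslope⟩ := exists_hasDerivAt_eq_slope (FF ε) (phi ε)
    (by linarith : t < t + 1)
    (fun y hy => (FF_hasDeriv hε (by
      rcases Set.mem_Icc.1 hy with ⟨h, _⟩; linarith)).continuousAt.continuousWithinAt)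
    (fun y hy => FF_hasDeriv hε (by rcases Set.mem_Ioo.1 hy with ⟨h, _⟩; linarith))
  rcases Set.mem_Ioo.1 hξ with ⟨hξ1, hξ2⟩
  have : phi ε ξ = FF ε (t+1) - FF ε t := by
    rw [hslope]; ring_nf
  rw [← this]
  exact phi_anti hε (by linarith) hξ2.le

lemma FF_nonpos (hε : 0 < ε) {x : ℝ} (hx : 3 ≤ x) : FF ε x ≤ 0 := by
  have h2 := loglog_pos hx
  have : (0:ℝ) ≤ Real.log (Real.log x) ^ (-ε) := Real.rpow_nonneg h2.le _
  have : (0:ℝ) < ε⁻¹ := by positivity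
  rw [FF]; nlinarith

/-- telescoping bound -/
lemma sum_phi_le (hε : 0 < ε) {N : ℕ} (hN : 3 ≤ N) (n : ℕ) :
    ∑ t ∈ Finset.Ico N n, phi ε t ≤ phi ε N - FF ε N := by
  have hN3 : (3:ℝ) ≤ (N:ℝ) := by exact_mod_cast hN
  have key : ∀ m : ℕ, N ≤ m → ∑ t ∈ Finset.Ico (N+1) (m+1), phi ε t ≤ FF ε m - FF ε N := by
    intro m hm
    induction m, hm using Nat.le_induction with
    | base => simp
    | succ m hm ih =>
        rw [Finset.sum_Ico_succ_top (by omega)]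
        have hm3 : (3:ℝ) ≤ (m:ℝ) := le_trans hN3 (by exact_mod_cast hm)
        have step := phi_step hε hm3
        have : ((m+1 : ℕ):ℝ) = (m:ℝ) + 1 := by push_cast; ring
        rw [this]
        linarith
  set m := max n N with hm
  have h1 : ∑ t ∈ Finset.Ico N n, phi ε t ≤ ∑ t ∈ Finset.Ico N (m+1), phi ε t := by
    apply Finset.sum_le_sum_of_subset_of_nonneg
    · apply Finset.Ico_subset_Ico le_rfl; omega
    · intro i hi _
      have : N ≤ i := (Finset.mem_Ico.1 hi).1
      exact (phi_pos hε (le_trans hN3 (by exact_mod_cast this))).le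
  have h2 : ∑ t ∈ Finset.Ico N (m+1), phi ε t
      = phi ε N + ∑ t ∈ Finset.Ico (N+1) (m+1), phi ε t := by
    rw [Finset.sum_eq_sum_Ico_succ_bot (by omega)]
  have h3 := key m (le_max_right n N)
  have h4 := FF_nonpos hε (le_trans hN3 (by exact_mod_cast le_max_right n N : (N:ℝ) ≤ m))
  linarith


open scoped Classical in
noncomputable def gg (A : Set ℕ) : ℕ → ℝ := fun a => if a ∈ A then ((a : ℝ))⁻¹ else 0

lemma gg_of_mem {A : Set ℕ} {a : ℕ} (h : a ∈ A) : gg A a = ((a:ℝ))⁻¹ := by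
  simp [gg, h]

lemma gg_nonneg (A : Set ℕ) (a : ℕ) : 0 ≤ gg A a := by
  classical
  by_cases h : a ∈ A
  · rw [gg_of_mem h]; positivity
  · have : gg A a = 0 := by simp [gg, h]
    rw [this]

lemma summable_gg {ε : ℝ} (hε : 0 < ε) {A : Set ℕ} (hA : A ⊆ {n | 0 < n})
    (hAO : (fun x : ℕ => (cnt A x : ℝ)) =O[Filter.atTop]
      (fun x : ℕ => (x : ℝ) / (Real.log x * Real.log (Real.log x) ^ (1 + ε)))) :
    Summable (gg A) := by
  classical
  obtain ⟨C, hC, hCb⟩ := hAO.exists_pos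
  obtain ⟨N₀, hN₀⟩ := eventually_atTop.1 hCb.bound
  set N₁ : ℕ := max N₀ 3 with hN₁def
  have hN₁3 : 3 ≤ N₁ := le_max_right _ _
  have hN₁3' : (3:ℝ) ≤ (N₁:ℝ) := by exact_mod_cast hN₁3
  -- pointwise bound for large t
  have hcnt_bound : ∀ t : ℕ, N₁ ≤ t → (cnt A t : ℝ) ≤
      C * ((t:ℝ) / (Real.log t * Real.log (Real.log t) ^ (1 + ε))) := by
    intro t ht
    have ht3 : (3:ℝ) ≤ (t:ℝ) := le_trans hN₁3' (by exact_mod_cast ht)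
    have hd : 0 < (t:ℝ) * Real.log t * Real.log (Real.log t) ^ (1 + ε) := denom_pos hε ht3
    have ht0 : (0:ℝ) < t := by linarith
    have hl : 0 < Real.log t * Real.log (Real.log t) ^ (1 + ε) := by nlinarith
    have h := hN₀ t (le_trans (le_max_left _ _) ht)
    rw [Real.norm_eq_abs, Real.norm_eq_abs, abs_of_nonneg (by positivity : (0:ℝ) ≤ (cnt A t : ℝ)),
      abs_of_nonneg (by positivity)] at h
    exact h
  set u : ℕ → ℝ := fun t => ((t:ℕ):ℝ)⁻¹ - (((t:ℕ):ℝ) + 1)⁻¹ with hudef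
  have hu_nonneg : ∀ t : ℕ, 0 ≤ u t ∨ t = 0 := by
    intro t
    rcases Nat.eq_zero_or_pos t with h | h
    · right; exact h
    · left
      have h1 : (0:ℝ) < t := by exact_mod_cast h
      have : ((t:ℝ) + 1)⁻¹ ≤ (t:ℝ)⁻¹ := by
        apply inv_anti₀ h1; linarith
      simp only [hudef]; linarith
  have hu_le_sq : ∀ t : ℕ, 1 ≤ t → u t ≤ (((t:ℝ))^2)⁻¹ := by
    intro t ht
    have h1 : (0:ℝ) < t := by exact_mod_cast ht
    have e : u t = ((t:ℝ) * ((t:ℝ)+1))⁻¹ := by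
      simp only [hudef]; field_simp; ring
    rw [e]
    apply inv_anti₀ (by positivity)
    nlinarith
  have hu_le_one : ∀ t : ℕ, 1 ≤ t → u t ≤ ((t:ℝ))⁻¹ := by
    intro t ht
    have h1 : (0:ℝ) < t := by exact_mod_cast ht
    simp only [hudef]
    have : (0:ℝ) ≤ ((t:ℝ) + 1)⁻¹ := by positivity
    linarith
  -- main partial sum bound
  apply summable_of_sum_range_le (gg_nonneg A) (c := (N₁:ℝ) + C * (phi ε N₁ - FF ε N₁) + 1)
  intro n
  set F : Finset ℕ := (Finset.range n).filter (fun a => a ∈ A) with hFdef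
  have hF1 : ∀ a ∈ F, 1 ≤ a := by
    intro a ha
    exact hA (Finset.mem_filter.1 ha).2
  have hstep0 : ∑ a ∈ Finset.range n, gg A a = ∑ a ∈ F, ((a:ℝ))⁻¹ := by
    rw [hFdef, Finset.sum_filter]
    exact Finset.sum_congr rfl (fun a _ => by by_cases h : a ∈ A <;> simp [gg, h])
  -- telescoping identity
  have htel : ∀ a ∈ F, ((a:ℝ))⁻¹ = (∑ t ∈ Finset.Ico a n, u t) + ((n:ℝ))⁻¹ := by
    intro a ha
    have han : a < n := Finset.mem_range.1 (Finset.mem_filter.1 ha).1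
    have hfu : ∀ k : ℕ, u k = (fun t : ℕ => ((t:ℝ))⁻¹) k - (fun t : ℕ => ((t:ℝ))⁻¹) (k+1) := by
      intro k; simp only [hudef]; push_cast; ring
    have hrange : ∀ m : ℕ, ∑ k ∈ Finset.range m, u k = -((m:ℝ))⁻¹ := by
      intro m
      rw [Finset.sum_congr rfl (fun k _ => hfu k),
        Finset.sum_range_sub' (fun t : ℕ => ((t:ℝ))⁻¹) m]
      norm_num
    have : ∑ t ∈ Finset.Ico a n, u t = ((a:ℝ))⁻¹ - ((n:ℝ))⁻¹ := by
      rw [Finset.sum_Ico_eq_sub _ han.le, hrange, hrange]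
      ring
    rw [this]; ring
  have hstep1 : ∑ a ∈ F, ((a:ℝ))⁻¹
      = (∑ a ∈ F, ∑ t ∈ Finset.Ico a n, u t) + F.card * ((n:ℝ))⁻¹ := by
    rw [Finset.sum_congr rfl htel, Finset.sum_add_distrib, Finset.sum_const, nsmul_eq_mul]
  have hcard_le : (F.card : ℝ) * ((n:ℝ))⁻¹ ≤ 1 := by
    have h1 : F.card ≤ n := le_trans (Finset.card_filter_le _ _) (by simp)
    rcases Nat.eq_zero_or_pos n with h | h
    · subst h
      simp
    · have hn : (0:ℝ) < n := by exact_mod_cast h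
      calc (F.card : ℝ) * ((n:ℝ))⁻¹ ≤ (n:ℝ) * ((n:ℝ))⁻¹ := by
            apply mul_le_mul_of_nonneg_right (by exact_mod_cast h1) (by positivity)
      _ = 1 := mul_inv_cancel₀ hn.ne'
  -- swap the double sum
  have hswap : (∑ a ∈ F, ∑ t ∈ Finset.Ico a n, u t)
      = ∑ t ∈ Finset.range n, ((F.filter (fun a => a ≤ t)).card : ℝ) * u t := by
    have h1 : ∀ a ∈ F, ∑ t ∈ Finset.Ico a n, u t
        = ∑ t ∈ Finset.range n, if a ≤ t then u t else 0 := by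
      intro a _
      rw [← Finset.sum_filter]
      congr 1
      ext t
      simp only [Finset.mem_Ico, Finset.mem_filter, Finset.mem_range]
      omega
    rw [Finset.sum_congr rfl h1, Finset.sum_comm]
    refine Finset.sum_congr rfl (fun t _ => ?_)
    rw [← Finset.sum_filter, Finset.sum_const, nsmul_eq_mul]
  -- bound each t-term
  have hterm : ∀ t ∈ Finset.range n, ((F.filter (fun a => a ≤ t)).card : ℝ) * u t
      ≤ (if t < N₁ then 1 else C * phi ε t) := by
    intro t _
    rcases Nat.eq_zero_or_pos t with rfl | ht1
    · have : (F.filter (fun a => a ≤ 0)).card = 0 := by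
        rw [Finset.card_eq_zero, Finset.filter_eq_empty_iff]
        intro a ha h0
        exact absurd (Nat.le_antisymm h0 (Nat.zero_le a) ▸ hF1 a ha) (by omega)
      rw [this]
      simp only [Nat.cast_zero, zero_mul]
      have : (0:ℕ) < N₁ := by omega
      simp [this]
    · have hu0 : 0 ≤ u t := (hu_nonneg t).resolve_right (by omega)
      by_cases htN : t < N₁
      · rw [if_pos htN]
        have hcard : ((F.filter (fun a => a ≤ t)).card : ℝ) ≤ (t:ℝ) := by
          have : (F.filter (fun a => a ≤ t)) ⊆ Finset.Icc 1 t := by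
            intro a ha
            rw [Finset.mem_filter] at ha
            exact Finset.mem_Icc.2 ⟨hF1 a ha.1, ha.2⟩
          have := Finset.card_le_card this
          simp only [Nat.card_Icc] at this
          exact_mod_cast le_trans this (by omega)
        have ht0 : (0:ℝ) < t := by exact_mod_cast ht1
        calc ((F.filter (fun a => a ≤ t)).card : ℝ) * u t ≤ (t:ℝ) * u t :=
              mul_le_mul_of_nonneg_right hcard hu0
        _ ≤ (t:ℝ) * ((t:ℝ))⁻¹ := mul_le_mul_of_nonneg_left (hu_le_one t ht1) ht0.le
        _ = 1 := mul_inv_cancel₀ ht0.ne'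
      · rw [if_neg htN]
        push_neg at htN
        have ht3 : (3:ℝ) ≤ (t:ℝ) := le_trans hN₁3' (by exact_mod_cast htN)
        have ht0 : (0:ℝ) < t := by linarith
        have hcard : ((F.filter (fun a => a ≤ t)).card : ℝ) ≤ (cnt A t : ℝ) := by
          rw [cnt_eq_card hA]
          have : (F.filter (fun a => a ≤ t)) ⊆ Af A t := by
            intro a ha
            rw [Finset.mem_filter] at ha
            exact mem_Af.2 ⟨⟨hF1 a ha.1, ha.2⟩, (Finset.mem_filter.1 ha.1).2⟩
          exact_mod_cast Finset.card_le_card this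
        have hd : 0 < (t:ℝ) * Real.log t * Real.log (Real.log t) ^ (1 + ε) := denom_pos hε ht3
        have hl : 0 < Real.log t * Real.log (Real.log t) ^ (1 + ε) := by nlinarith
        calc ((F.filter (fun a => a ≤ t)).card : ℝ) * u t ≤ (cnt A t : ℝ) * u t :=
              mul_le_mul_of_nonneg_right hcard hu0
        _ ≤ (C * ((t:ℝ) / (Real.log t * Real.log (Real.log t) ^ (1 + ε)))) * (((t:ℝ))^2)⁻¹ := by
              apply mul_le_mul (hcnt_bound t htN) (hu_le_sq t ht1) hu0 (by positivity)
        _ = C * phi ε t := by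
              rw [phi]
              field_simp
  -- assemble
  have hsum_w : ∑ t ∈ Finset.range n, (if t < N₁ then (1:ℝ) else C * phi ε t)
      ≤ (N₁:ℝ) + C * (phi ε N₁ - FF ε N₁) := by
    rw [Finset.sum_ite]
    have e1 : (∑ _t ∈ (Finset.range n).filter (fun t => t < N₁), (1:ℝ))
        ≤ (N₁:ℝ) := by
      rw [Finset.sum_const, nsmul_eq_mul, mul_one]
      have : (Finset.range n).filter (fun t => t < N₁) ⊆ Finset.range N₁ := by
        intro t ht
        rw [Finset.mem_filter] at ht
        exact Finset.mem_range.2 ht.2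
      exact_mod_cast le_trans (Finset.card_le_card this) (by simp)
    have e2 : ∑ t ∈ (Finset.range n).filter (fun t => ¬ t < N₁), C * phi ε t
        ≤ C * (phi ε N₁ - FF ε N₁) := by
      have : (Finset.range n).filter (fun t => ¬ t < N₁) = Finset.Ico N₁ n := by
        ext t
        simp only [Finset.mem_filter, Finset.mem_range, Finset.mem_Ico]
        omega
      rw [this, ← Finset.mul_sum]
      exact mul_le_mul_of_nonneg_left (sum_phi_le hε hN₁3 n) hC.le
    linarith
  calc ∑ a ∈ Finset.range n, gg A a
      = (∑ t ∈ Finset.range n, ((F.filter (fun a => a ≤ t)).card : ℝ) * u t)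
        + F.card * ((n:ℝ))⁻¹ := by rw [hstep0, hstep1, hswap]
  _ ≤ ((N₁:ℝ) + C * (phi ε N₁ - FF ε N₁)) + 1 := by
      have := Finset.sum_le_sum hterm
      linarith [le_trans this hsum_w]
  _ = (N₁:ℝ) + C * (phi ε N₁ - FF ε N₁) + 1 := by ring


end Stmt7

open Stmt7 in
theorem stmt_7 (ε : ℝ) (hε : 0 < ε) :
    ¬ ∃ A B : Set ℕ, MC2 A B ∧ A.Infinite ∧ B.Infinite ∧
        (fun x : ℕ => (cnt B x : ℝ)) =o[Filter.atTop] (fun x : ℕ => (x : ℝ)) ∧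
        (fun x : ℕ => (cnt A x : ℝ)) =O[Filter.atTop]
          (fun x : ℕ => (x : ℝ) / (Real.log x * Real.log (Real.log x) ^ (1 + ε))) := by
  classical
  rintro ⟨A, B, hMC, -, -, hBo, hAO⟩
  obtain ⟨hApos, hBpos, -⟩ := id hMC
  have hgsum : Summable (gg A) := summable_gg hε hApos hAO
  set S : ℝ := ∑' a, gg A a with hSdef
  have hS0 : 0 ≤ S := tsum_nonneg (gg_nonneg A)
  set δ : ℝ := (4 * (S + 1))⁻¹ with hδdef
  have hδ : 0 < δ := by positivity
  have hδS : δ * S ≤ 4⁻¹ := by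
    have hkey : δ * (S + 1) = 4⁻¹ := by
      rw [hδdef]; field_simp
    have : δ * S = δ * (S + 1) - δ := by ring
    linarith
  obtain ⟨M₀, hM₀⟩ := eventually_atTop.1 (hBo.def hδ)
  set M : ℕ := max M₀ 1 with hMdef
  have hM1 : 1 ≤ M := le_max_right _ _
  obtain ⟨K, hK⟩ := eventually_atTop.1 ((tendsto_sum_nat_add (gg A)).eventually
      (eventually_le_nhds (by norm_num : (0:ℝ) < 4⁻¹)))
  set x : ℕ := M * K + 1 with hxdef
  have hx1 : 1 ≤ x := by omega
  have hx0 : (0:ℝ) < (x:ℝ) := by exact_mod_cast hx1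
  -- counting inequality
  have hcount : (x:ℝ) ≤ ∑ a ∈ Af A x, (cnt B (x / a) : ℝ) := by
    exact_mod_cast Nat.cast_le.2 (mc2_count hMC x)
  set F₁ : Finset ℕ := (Af A x).filter (fun a => M ≤ x / a) with hF₁def
  set F₂ : Finset ℕ := (Af A x).filter (fun a => ¬ M ≤ x / a) with hF₂def
  have hsplit : ∑ a ∈ Af A x, (cnt B (x / a) : ℝ)
      = ∑ a ∈ F₁, (cnt B (x / a) : ℝ) + ∑ a ∈ F₂, (cnt B (x / a) : ℝ) :=
    (Finset.sum_filter_add_sum_filter_not _ _ _).symm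
  -- F₁ bound
  have hF₁bound : ∑ a ∈ F₁, (cnt B (x / a) : ℝ) ≤ 4⁻¹ * (x:ℝ) := by
    have hterm : ∀ a ∈ F₁, (cnt B (x / a) : ℝ) ≤ δ * ((x:ℝ) * ((a:ℝ))⁻¹) := by
      intro a ha
      rw [Finset.mem_filter] at ha
      obtain ⟨haf, hM⟩ := ha
      obtain ⟨⟨ha1, hax⟩, haA⟩ := mem_Af.1 haf
      have h := hM₀ (x / a) (le_trans (le_max_left _ _) hM)
      rw [Real.norm_natCast, Real.norm_natCast] at h
      have h2 : ((x / a : ℕ) : ℝ) ≤ (x:ℝ) / (a:ℝ) := Nat.cast_div_le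
      calc (cnt B (x / a) : ℝ) ≤ δ * ((x / a : ℕ) : ℝ) := h
      _ ≤ δ * ((x:ℝ) / (a:ℝ)) := by
          exact mul_le_mul_of_nonneg_left h2 hδ.le
      _ = δ * ((x:ℝ) * ((a:ℝ))⁻¹) := by rw [div_eq_mul_inv]
    have hsum1 : ∑ a ∈ F₁, ((a:ℝ))⁻¹ ≤ S := by
      have he : ∑ a ∈ F₁, ((a:ℝ))⁻¹ = ∑ a ∈ F₁, gg A a := by
        refine Finset.sum_congr rfl fun a ha => ?_
        rw [Finset.mem_filter] at ha
        exact (gg_of_mem (mem_Af.1 ha.1).2).symm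
      rw [he, hSdef]
      exact Summable.sum_le_tsum F₁ (fun i _ => gg_nonneg A i) hgsum
    calc ∑ a ∈ F₁, (cnt B (x / a) : ℝ) ≤ ∑ a ∈ F₁, δ * ((x:ℝ) * ((a:ℝ))⁻¹) :=
          Finset.sum_le_sum hterm
    _ = δ * (x:ℝ) * ∑ a ∈ F₁, ((a:ℝ))⁻¹ := by
        rw [Finset.mul_sum]
        exact Finset.sum_congr rfl fun a _ => by ring
    _ ≤ δ * (x:ℝ) * S := by
        exact mul_le_mul_of_nonneg_left hsum1 (by positivity)
    _ = (δ * S) * (x:ℝ) := by ring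
    _ ≤ 4⁻¹ * (x:ℝ) := mul_le_mul_of_nonneg_right hδS hx0.le
  -- F₂ bound
  have hF₂bound : ∑ a ∈ F₂, (cnt B (x / a) : ℝ) ≤ 4⁻¹ * (x:ℝ) := by
    have hKlt : ∀ a ∈ F₂, K < a := by
      intro a ha
      rw [Finset.mem_filter] at ha
      obtain ⟨haf, hM⟩ := ha
      obtain ⟨⟨ha1, hax⟩, haA⟩ := mem_Af.1 haf
      push_neg at hM
      have hlt : x < M * a := (Nat.div_lt_iff_lt_mul ha1).1 hM
      have : M * K < M * a := by omega
      exact Nat.lt_of_mul_lt_mul_left this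
    have hterm : ∀ a ∈ F₂, (cnt B (x / a) : ℝ) ≤ (x:ℝ) * ((a:ℝ))⁻¹ := by
      intro a ha
      rw [Finset.mem_filter] at ha
      obtain ⟨⟨ha1, hax⟩, haA⟩ := mem_Af.1 ha.1
      calc (cnt B (x / a) : ℝ) ≤ ((x / a : ℕ) : ℝ) := by
            exact_mod_cast cnt_le_self hBpos (x / a)
      _ ≤ (x:ℝ) / (a:ℝ) := Nat.cast_div_le
      _ = (x:ℝ) * ((a:ℝ))⁻¹ := div_eq_mul_inv _ _
    have hsum2 : ∑ a ∈ F₂, ((a:ℝ))⁻¹ ≤ 4⁻¹ := by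
      have he : ∑ a ∈ F₂, ((a:ℝ))⁻¹ = ∑ a ∈ F₂, gg A a := by
        refine Finset.sum_congr rfl fun a ha => ?_
        rw [Finset.mem_filter] at ha
        exact (gg_of_mem (mem_Af.1 ha.1).2).symm
      have hre : ∑ a ∈ F₂, gg A a = ∑ i ∈ F₂.image (fun a => a - K), gg A (i + K) := by
        rw [Finset.sum_image (fun a ha b hb hab => by
          have := hKlt a ha; have := hKlt b hb; omega)]
        refine Finset.sum_congr rfl fun a ha => ?_
        congr 1
        have := hKlt a ha
        omega
      have htail : ∑ i ∈ F₂.image (fun a => a - K), gg A (i + K) ≤ ∑' i, gg A (i + K) :=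
        Summable.sum_le_tsum _ (fun i _ => gg_nonneg A _) ((summable_nat_add_iff K).2 hgsum)
      have hKK := hK K le_rfl
      rw [he, hre]
      linarith
    calc ∑ a ∈ F₂, (cnt B (x / a) : ℝ) ≤ ∑ a ∈ F₂, (x:ℝ) * ((a:ℝ))⁻¹ :=
          Finset.sum_le_sum hterm
    _ = (x:ℝ) * ∑ a ∈ F₂, ((a:ℝ))⁻¹ := by rw [Finset.mul_sum]
    _ ≤ (x:ℝ) * 4⁻¹ := mul_le_mul_of_nonneg_left hsum2 hx0.le
    _ = 4⁻¹ * (x:ℝ) := by ring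
  rw [hsplit] at hcount
  linarith
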